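/- On the flag variety LF_α(1,2;V) (V ≅ ℂ⁶, α a non-degenerate skew form), with divisor classes H₁, H₂ satisfying the Segre-class relations H₁^i·(H₂−H₁)^{8−i} = (−1)^{5−i}·s_{5−i}(N)·H₁^i on ℙ(V)=ℙ⁵ where the Chern polynomial of the null-correlation bundle N is 1 + H₁²t² + H₁⁴t⁴, the intersection numbers are H₁⁵H₂³ = 1, H₁⁴H₂⁴ = 4, H₁³H₂⁵ = 9, H₁²H₂⁶ = 14, H₁H₂⁷ = 14. -/
import Mathlib


/-- Intersection numbers on `LF_α(1,2;V)`.  Work in a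
commutative ring (the Chow ring) with degree map `deg : R →+ ℤ`, classes
`H₁, H₂`, the Segre-class relations
`H₁^i·(H₂−H₁)^{8−i} = (−1)^{5−i}·s_{5−i}(N)·H₁^i` where the Chern polynomial
of the null-correlation bundle `N` is `1 + H₁²t² + H₁⁴t⁴` (so `s₀ = 1`,
`s₁ = s₃ = s₄ = s₅ = 0`, `s₂ = −H₁²`), with `deg(H₁⁵) = 1` and `H₁⁶ = 0`
(on `ℙ⁵`).  Then `H₁⁵H₂³ = 1`, `H₁⁴H₂⁴ = 4`, `H₁³H₂⁵ = 9`, `H₁²H₂⁶ = 14`,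
`H₁H₂⁷ = 14`. -/
theorem stmt_9 {R : Type*} [CommRing R] (H1 H2 : R) (deg : R →+ ℤ)
    (hP5 : deg (H1 ^ 5) = 1)
    (hvan : H1 ^ 6 = 0)
    (h5 : deg (H1 ^ 5 * (H2 - H1) ^ 3) = deg (H1 ^ 5))
    (h4 : deg (H1 ^ 4 * (H2 - H1) ^ 4) = 0)
    (h3 : deg (H1 ^ 3 * (H2 - H1) ^ 5) = deg (-(H1 ^ 2) * H1 ^ 3))
    (h2 : deg (H1 ^ 2 * (H2 - H1) ^ 6) = 0)
    (h1 : deg (H1 * (H2 - H1) ^ 7) = 0)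
    (h0 : deg ((H2 - H1) ^ 8) = 0) :
    deg (H1 ^ 5 * H2 ^ 3) = 1 ∧ deg (H1 ^ 4 * H2 ^ 4) = 4 ∧
    deg (H1 ^ 3 * H2 ^ 5) = 9 ∧ deg (H1 ^ 2 * H2 ^ 6) = 14 ∧
    deg (H1 * H2 ^ 7) = 14 := by
  have E5 : H1 ^ 5 * (H2 - H1) ^ 3 = H1 ^ 5 * H2 ^ 3 := by
    have : H1 ^ 5 * (H2 - H1) ^ 3
        = H1 ^ 5 * H2 ^ 3 + H1 ^ 6 * (-3 * H2 ^ 2 + 3 * H1 * H2 - H1 ^ 2) := by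
      ring
    rw [this, hvan]; ring
  have E4 : H1 ^ 4 * (H2 - H1) ^ 4
      = H1 ^ 4 * H2 ^ 4 + (-4 : ℤ) • (H1 ^ 5 * H2 ^ 3) := by
    have : H1 ^ 4 * (H2 - H1) ^ 4
        = H1 ^ 4 * H2 ^ 4 + (-4 : ℤ) • (H1 ^ 5 * H2 ^ 3)
          + H1 ^ 6 * (6 * H2 ^ 2 - 4 * H1 * H2 + H1 ^ 2) := by
      rw [zsmul_eq_mul]; push_cast; ring
    rw [this, hvan]; ring
  have E3 : H1 ^ 3 * (H2 - H1) ^ 5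
      = H1 ^ 3 * H2 ^ 5 + (-5 : ℤ) • (H1 ^ 4 * H2 ^ 4) + (10 : ℤ) • (H1 ^ 5 * H2 ^ 3) := by
    have : H1 ^ 3 * (H2 - H1) ^ 5
        = H1 ^ 3 * H2 ^ 5 + (-5 : ℤ) • (H1 ^ 4 * H2 ^ 4) + (10 : ℤ) • (H1 ^ 5 * H2 ^ 3)
          + H1 ^ 6 * (-10 * H2 ^ 2 + 5 * H1 * H2 - H1 ^ 2) := by
      rw [zsmul_eq_mul, zsmul_eq_mul]; push_cast; ring
    rw [this, hvan]; ring
  have E2 : H1 ^ 2 * (H2 - H1) ^ 6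
      = H1 ^ 2 * H2 ^ 6 + (-6 : ℤ) • (H1 ^ 3 * H2 ^ 5) + (15 : ℤ) • (H1 ^ 4 * H2 ^ 4)
        + (-20 : ℤ) • (H1 ^ 5 * H2 ^ 3) := by
    have : H1 ^ 2 * (H2 - H1) ^ 6
        = H1 ^ 2 * H2 ^ 6 + (-6 : ℤ) • (H1 ^ 3 * H2 ^ 5) + (15 : ℤ) • (H1 ^ 4 * H2 ^ 4)
          + (-20 : ℤ) • (H1 ^ 5 * H2 ^ 3)
          + H1 ^ 6 * (15 * H2 ^ 2 - 6 * H1 * H2 + H1 ^ 2) := by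
      simp only [zsmul_eq_mul]; push_cast; ring
    rw [this, hvan]; ring
  have E1 : H1 * (H2 - H1) ^ 7
      = H1 * H2 ^ 7 + (-7 : ℤ) • (H1 ^ 2 * H2 ^ 6) + (21 : ℤ) • (H1 ^ 3 * H2 ^ 5)
        + (-35 : ℤ) • (H1 ^ 4 * H2 ^ 4) + (35 : ℤ) • (H1 ^ 5 * H2 ^ 3) := by
    have : H1 * (H2 - H1) ^ 7
        = H1 * H2 ^ 7 + (-7 : ℤ) • (H1 ^ 2 * H2 ^ 6) + (21 : ℤ) • (H1 ^ 3 * H2 ^ 5)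
          + (-35 : ℤ) • (H1 ^ 4 * H2 ^ 4) + (35 : ℤ) • (H1 ^ 5 * H2 ^ 3)
          + H1 ^ 6 * (-21 * H2 ^ 2 + 7 * H1 * H2 - H1 ^ 2) := by
      simp only [zsmul_eq_mul]; push_cast; ring
    rw [this, hvan]; ring
  have Eneg : -(H1 ^ 2) * H1 ^ 3 = -(H1 ^ 5) := by ring
  rw [E5, hP5] at h5
  rw [E4] at h4
  rw [E3, Eneg] at h3
  rw [E2] at h2
  rw [E1] at h1
  simp only [map_add, map_zsmul, map_neg, hP5, smul_eq_mul] at h3 h4 h2 h1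
  refine ⟨h5, by linarith, by linarith, by linarith, by linarith⟩
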